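/- An integrable positive solution f on ℝ of the first-order ODE (G(μ) - v) f(v) = σ f'(v) + C, where μ = ∫ v f(v) dv, exists only if C = 0, and in that case f(v) = \bar{C} exp((2 G(μ) v - v²)/(2σ)) for some constant \bar{C} > 0. -/

import Mathlib

open Real MeasureTheory Filter Topology

lemma aux_neg_deriv (k : ℝ → ℝ) (c : ℝ) (hc : c < 0) (e : ℝ → ℝ) (he : Continuous e)
    (hk : ∀ v, HasDerivAt k (c * Real.exp (e v)) v) (hpos : ∀ v, 0 < k v)
    (M : ℝ) (hM : ∀ v, M ≤ v → 0 ≤ e v) : False := by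
  have hcne : c ≠ 0 := hc.ne
  set b := M + k M / (-c) + 1 with hb
  have hdivpos : 0 < k M / (-c) := div_pos (hpos M) (neg_pos.2 hc)
  have hMb : M ≤ b := by simp only [hb]; linarith
  have hcont : Continuous fun v => c * Real.exp (e v) :=
    continuous_const.mul (Real.continuous_exp.comp he)
  have hftc : (∫ u in M..b, c * Real.exp (e u)) = k b - k M :=
    intervalIntegral.integral_eq_sub_of_hasDerivAt (fun u _ => hk u)
      (hcont.intervalIntegrable M b)
  have hbound : (∫ u in M..b, c * Real.exp (e u)) ≤ ∫ _u in M..b, c := by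
    apply intervalIntegral.integral_mono_on hMb (hcont.intervalIntegrable M b)
      intervalIntegrable_const
    intro u hu
    have h1 : (1:ℝ) ≤ Real.exp (e u) := Real.one_le_exp (hM u hu.1)
    nlinarith
  rw [hftc, intervalIntegral.integral_const, smul_eq_mul] at hbound
  have hkey : k M / (-c) * c = -(k M) := by
    rw [div_mul_eq_mul_div, mul_div_assoc, div_neg, div_self hcne]; ring
  have hbM : (b - M) * c = -(k M) + c := by
    have : b - M = k M / (-c) + 1 := by simp only [hb]; ring
    rw [this, add_mul, one_mul, hkey]
  have : k b ≤ c := by linarith [hbound, hbM.symm ▸ hbound]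
  linarith [hpos b]

/-- An integrable positive solution of (G(μ)-v)f = σ f' + C exists only if C = 0,
and then f is proportional to exp((2G(μ)v - v²)/(2σ)). -/
theorem stmt1 (σ C : ℝ) (hσ : 0 < σ) (G : ℝ → ℝ)
    (f : ℝ → ℝ) (hfpos : ∀ v, 0 < f v) (hfdiff : Differentiable ℝ f)
    (hfi : Integrable f) (hfm : Integrable (fun v => v * f v))
    (hODE : ∀ v, (G (∫ u, u * f u) - v) * f v = σ * deriv f v + C) :
    C = 0 ∧ ∃ Cb : ℝ, 0 < Cb ∧
      ∀ v, f v = Cb * Real.exp ((2 * G (∫ u, u * f u) * v - v^2) / (2*σ)) := by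
  set m := G (∫ u, u * f u) with hm
  set E : ℝ → ℝ := fun v => (v^2 - 2*m*v)/(2*σ) with hE
  set h : ℝ → ℝ := fun v => f v * Real.exp (E v) with hh
  have hσne : σ ≠ 0 := hσ.ne'
  have hEcont : Continuous E := by fun_prop
  have hder : ∀ v, HasDerivAt h ((-(C/σ)) * Real.exp (E v)) v := by
    intro v
    have hdE : HasDerivAt E ((2*v - 2*m)/(2*σ)) v := by
      have h1 : HasDerivAt (fun v : ℝ => v^2 - 2*m*v) (2*v - 2*m) v := by
        have := ((hasDerivAt_pow 2 v).sub ((hasDerivAt_id v).const_mul (2*m)))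
        exact this.congr_deriv (by ring)
      exact h1.div_const (2*σ)
    have hdexp : HasDerivAt (fun v => Real.exp (E v))
        (Real.exp (E v) * ((2*v - 2*m)/(2*σ))) v := hdE.exp
    have hdh : HasDerivAt h
        (deriv f v * Real.exp (E v) + f v * (Real.exp (E v) * ((2*v - 2*m)/(2*σ)))) v :=
      ((hfdiff v).hasDerivAt).mul hdexp
    have hdf : deriv f v = ((m - v) * f v - C)/σ := by
      have := hODE v
      field_simp
      linarith
    convert hdh using 1
    rw [hdf]
    field_simp
    ring
  have hpos : ∀ v, 0 < h v := fun v => mul_pos (hfpos v) (Real.exp_pos _)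
  have hC0 : C = 0 := by
    by_contra hC
    rcases lt_or_gt_of_ne hC with hCneg | hCpos
    · -- C < 0 : work with v ↦ h (-v)
      have hc : C/σ < 0 := div_neg_of_neg_of_pos hCneg hσ
      refine aux_neg_deriv (fun v => h (-v)) (C/σ) hc (fun v => E (-v))
        (hEcont.comp continuous_neg) (fun v => ?_) (fun v => hpos (-v))
        (max 0 (-(2*m))) (fun v hv => ?_)
      · have := (hder (-v)).comp v (hasDerivAt_neg v)
        exact this.congr_deriv (by ring)
      · have h0 : (0:ℝ) ≤ v := le_trans (le_max_left _ _) hv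
        have h2 : -(2*m) ≤ v := le_trans (le_max_right _ _) hv
        have : (0:ℝ) ≤ (-v)^2 - 2*m*(-v) := by nlinarith
        exact div_nonneg this (by linarith)
    · -- C > 0
      have hc : -(C/σ) < 0 := by
        have : 0 < C/σ := div_pos hCpos hσ
        linarith
      refine aux_neg_deriv h (-(C/σ)) hc E hEcont hder hpos
        (max 0 (2*m)) (fun v hv => ?_)
      have h0 : (0:ℝ) ≤ v := le_trans (le_max_left _ _) hv
      have h2 : 2*m ≤ v := le_trans (le_max_right _ _) hv
      have : (0:ℝ) ≤ v^2 - 2*m*v := by nlinarith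
      exact div_nonneg this (by linarith)
  have hconst : ∀ v, h v = h 0 := by
    have hdz : ∀ v, deriv h v = 0 := by
      intro v
      rw [(hder v).deriv, hC0]
      simp
    exact fun v =>
      is_const_of_deriv_eq_zero (fun v => (hder v).differentiableAt) hdz v 0
  refine ⟨hC0, f 0, hfpos 0, fun v => ?_⟩
  have key : f v * Real.exp (E v) = f 0 := by
    have := hconst v
    simp only [hh, hE] at this ⊢
    simpa using this
  have h1 : f v = f 0 * Real.exp (-(E v)) := by
    rw [← key, mul_assoc, ← Real.exp_add, add_neg_cancel, Real.exp_zero, mul_one]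
  rw [h1]
  congr 1
  simp only [hE]
  ring
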